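/- arXiv:2111.04977 — 2 statements merged into one kernel-verified Lean document; each statement's English description precedes it below -/
import Mathlib

section
/- Let i ≥ 1 and let S be any nearest-neighbour path in 2^{−n}ℤ³ started at the origin, defined at least up to time t_S(a_{i+1}) < ∞, for which the events F_i and G_i hold (as deterministic conditions on the path). Then len(ξ_i) ≤ len(ξ₀) + Σ_{l=1}^{i} ( len(λ_l) + |ξ_i ∩ H(a_l − q, a_l + q]| ) = len(ξ'_i) + Σ_{l=1}^{i} |ξ_i ∩ H(a_l − q, a_l + q]|, where |D| denotes the number of points of D ∩ 2^{−n}ℤ³. -/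
open MeasureTheory ProbabilityTheory Filter Set
open scoped ENNReal NNReal

noncomputable section

local instance : DecidableEq E3 := Classical.decEq _

/-- `ℝ³` with the Euclidean norm. -/
abbrev E3 := EuclideanSpace ℝ (Fin 3)

/-- `x` is a point of the rescaled lattice `2^{-n} ℤ³`. -/
def IsLatticePoint (n : ℕ) (x : E3) : Prop :=
  ∀ i : Fin 3, ∃ z : ℤ, x i = (z : ℝ) * (2 : ℝ) ^ (-(n : ℤ))

/-- The six nearest-neighbour steps of length `2^{-n}`. -/
def nbhdSteps (n : ℕ) : Finset E3 :=
  (Finset.univ : Finset (Fin 3 × Bool)).image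
    fun p => (if p.2 then (2 : ℝ) ^ (-(n : ℤ)) else -((2 : ℝ) ^ (-(n : ℤ)))) •
      EuclideanSpace.single p.1 (1 : ℝ)

/-- The uniform distribution on the six nearest-neighbour steps of length `2^{-n}`. -/
def stepLaw (n : ℕ) : Measure E3 :=
  ((nbhdSteps n).card : ℝ≥0∞)⁻¹ • ∑ v ∈ nbhdSteps n, Measure.dirac v

/-- `S` is a simple random walk on `2^{-n} ℤ³` started at `x₀`, under the probability
measure `P`: it starts at `x₀` and has i.i.d. increments, uniform on the six
nearest-neighbour steps of length `2^{-n}`. -/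
structure IsSRW {Ω : Type*} [MeasurableSpace Ω] (P : Measure Ω) (n : ℕ) (x₀ : E3)
    (S : ℕ → Ω → E3) : Prop where
  isProb : IsProbabilityMeasure P
  meas : ∀ k, Measurable (S k)
  init : ∀ ω, S 0 ω = x₀
  indep : iIndepFun (fun k ω => S (k + 1) ω - S k ω) P
  law : ∀ k, P.map (fun ω => S (k + 1) ω - S k ω) = stepLaw n

/-- First exit time of the path `w` from the (open) ball `B(x, r)`:
the first `k` with `‖w k - x‖ ≥ r` (with the convention `sInf ∅ = 0`). -/
def exitTime (w : ℕ → E3) (x : E3) (r : ℝ) : ℕ :=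
  sInf {k | r ≤ ‖w k - x‖}

/-- The times `s₀, s₁, s₂, …` of the chronological loop erasure of the path
`w(0), …, w(m)`:  `s₀ = max{j ≤ m : w j = w 0}` and
`s_{i+1} = max{j ≤ m : w j = w (s_i + 1)}`. -/
def leTime (w : ℕ → E3) (m : ℕ) : ℕ → ℕ
  | 0 => sSup {j | j ≤ m ∧ w j = w 0}
  | i + 1 => sSup {j | j ≤ m ∧ w j = w (leTime w m i + 1)}

/-- The length of the loop erasure `LE(w[0,m])`, i.e. `min{i : w (s_i) = w m}`. -/
def leLen (w : ℕ → E3) (m : ℕ) : ℕ :=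
  sInf {i | w (leTime w m i) = w m}

/-- The loop erasure `LE(w[0,m])` as a function of (discrete) time:
`LE(w[0,m])(i) = w (s_i)`. -/
def leFun (w : ℕ → E3) (m : ℕ) (i : ℕ) : E3 :=
  w (leTime w m i)

/-- First exit time from the unit ball. -/
def walkExitUnit (w : ℕ → E3) : ℕ := exitTime w 0 1

/-- Length `M_n` of the loop-erased random walk `γ_n = LE (S[0, T₁])`. -/
def lerwLen (w : ℕ → E3) : ℕ := leLen w (walkExitUnit w)

/-- The loop-erased random walk `γ_n = LE (S[0, T₁])` across the unit ball. -/
def lerwFun (w : ℕ → E3) : ℕ → E3 := leFun w (walkExitUnit w)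

end
noncomputable section

/-- The greedy sequence of `r`-displacement times of the path `w(0), …, w(m)`:
`σ₀ = 0` and `σ_{l+1} = inf{σ_l ≤ j ≤ m : ‖w j - w (σ_l)‖ ≥ r}`. -/
def hitSeq (w : ℕ → E3) (m : ℕ) (r : ℝ) : ℕ → ℕ
  | 0 => 0
  | l + 1 => sInf {j | hitSeq w m r l ≤ j ∧ j ≤ m ∧ r ≤ ‖w j - w (hitSeq w m r l)‖}

/-- The number of `r`-displacement times of the path `w(0), …, w(m)`: the largest `l`
such that `σ_l` is well defined (i.e. all the defining sets up to step `l` are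
nonempty, equivalently the greedy sequence is strictly increasing up to `l`). -/
def hitCount (w : ℕ → E3) (m : ℕ) (r : ℝ) : ℕ :=
  sSup {l | ∀ i < l, hitSeq w m r i < hitSeq w m r (i + 1)}

/-- Linear interpolation of a discrete path `g` at a real time `t`. -/
def interp (g : ℕ → E3) (t : ℝ) : E3 :=
  (1 - (t - ⌊t⌋₊)) • g ⌊t⌋₊ + (t - ⌊t⌋₊) • g (⌊t⌋₊ + 1)

/-- A parametrized curve: a time duration together with a function of time. -/
structure Curve where
  dur : ℝ
  toFun : ℝ → E3

/-- A curve is *nice* if its duration is nonnegative, it is continuous, it takes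
values in the closed unit ball and it is determined by its values on `[0, dur]`. -/
def Curve.IsNice (c : Curve) : Prop :=
  0 ≤ c.dur ∧ Continuous c.toFun ∧ (∀ t, ‖c.toFun t‖ ≤ 1) ∧
    ∀ t, c.toFun t = c.toFun (max 0 (min t c.dur))

/-- The metric `ρ(λ₁, λ₂) = |t_{λ₁} - t_{λ₂}| + max_{0 ≤ s ≤ 1} |λ₁(s t_{λ₁}) - λ₂(s t_{λ₂})|`
on curves. -/
def curveDist (a b : Curve) : ℝ :=
  |a.dur - b.dur| + ⨆ s : Icc (0:ℝ) 1, ‖a.toFun ((s : ℝ) * a.dur) - b.toFun ((s : ℝ) * b.dur)‖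

/-- The time-rescaled loop-erased random walk `η_n(t) = γ_n(2^{βn} t)`,
`0 ≤ t ≤ 2^{-βn} M_n`, as a curve (with `γ_n` linearly interpolated). -/
def lerwCurve (β : ℝ) (n : ℕ) (w : ℕ → E3) : Curve where
  dur := (2 : ℝ) ^ (-(β * n)) * lerwLen w
  toFun := fun t =>
    interp (lerwFun w)
      ((2 : ℝ) ^ (β * n) * max 0 (min t ((2 : ℝ) ^ (-(β * n)) * lerwLen w)))

end
noncomputable section

/-- `a_i = 2^{-m} (2i - 1)`. -/
def aTube (m : ℕ) (i : ℕ) : ℝ := (2 : ℝ) ^ (-(m : ℤ)) * (2 * (i : ℝ) - 1)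

/-- `q = 2^{-m-m₀}`. -/
def qTube (m m₀ : ℕ) : ℝ := (2 : ℝ) ^ (-((m : ℤ) + (m₀ : ℤ)))

/-- The tube `H[a, b]` (side length `2^{-m+1}` in the transverse directions). -/
def slabCC (m : ℕ) (a b : ℝ) : Set E3 :=
  {x | a ≤ x 0 ∧ x 0 ≤ b ∧ |x 1| ≤ (2 : ℝ) ^ (-(m : ℤ)) ∧ |x 2| ≤ (2 : ℝ) ^ (-(m : ℤ))}

/-- The tube `H(a, b]`. -/
def slabOC (m : ℕ) (a b : ℝ) : Set E3 :=
  {x | a < x 0 ∧ x 0 ≤ b ∧ |x 1| ≤ (2 : ℝ) ^ (-(m : ℤ)) ∧ |x 2| ≤ (2 : ℝ) ^ (-(m : ℤ))}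

/-- The square cross-section `H(a)`. -/
def faceH (m : ℕ) (a : ℝ) : Set E3 :=
  {x | x 0 = a ∧ |x 1| ≤ (2 : ℝ) ^ (-(m : ℤ)) ∧ |x 2| ≤ (2 : ℝ) ^ (-(m : ℤ))}

/-- The smaller square cross-section `G(a)`. -/
def faceG (m : ℕ) (a : ℝ) : Set E3 :=
  {x | x 0 = a ∧ |x 1| ≤ (2 : ℝ) ^ (-(m : ℤ) - 1) ∧ |x 2| ≤ (2 : ℝ) ^ (-(m : ℤ) - 1)}

/-- The hitting time `t_λ(a) = inf{k ≥ 0 : λ(k) ∈ H(a)}` (with `sInf ∅ = 0`). -/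
def tFace (m : ℕ) (w : ℕ → E3) (a : ℝ) : ℕ := sInf {k | w k ∈ faceH m a}

/-- `t_λ(a) < ∞`. -/
def hitsFace (m : ℕ) (w : ℕ → E3) (a : ℝ) : Prop := ∃ k, w k ∈ faceH m a

/-- The event `A₀`. -/
def eventA0 (m m₀ : ℕ) (w : ℕ → E3) : Prop :=
  hitsFace m w (aTube m 1) ∧
  w (tFace m w (aTube m 1)) ∈ faceG m (aTube m 1) ∧
  (∀ k ≤ tFace m w (aTube m 1), w k ∈ slabCC m (aTube m 0) (aTube m 1)) ∧
  ∀ k, tFace m w (aTube m 1 - qTube m m₀) ≤ k → k ≤ tFace m w (aTube m 1) →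
    w k ∉ faceH m (aTube m 1 - 2 * qTube m m₀)

/-- The event `A_i`, `i ≥ 1`. -/
def eventAi (m m₀ : ℕ) (w : ℕ → E3) (i : ℕ) : Prop :=
  hitsFace m w (aTube m i) ∧ hitsFace m w (aTube m (i + 1)) ∧
  tFace m w (aTube m i) < tFace m w (aTube m (i + 1)) ∧
  w (tFace m w (aTube m (i + 1))) ∈ faceG m (aTube m (i + 1)) ∧
  (∀ k, tFace m w (aTube m i) ≤ k → k ≤ tFace m w (aTube m (i + 1)) →
    w k ∈ slabOC m (aTube m i - qTube m m₀) (aTube m (i + 1))) ∧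
  ∀ k, tFace m w (aTube m (i + 1) - qTube m m₀) ≤ k → k ≤ tFace m w (aTube m (i + 1)) →
    w k ∈ slabCC m (aTube m (i + 1) - 2 * qTube m m₀) (aTube m (i + 1))

/-- The event `A_i` for all `i ≥ 0`. -/
def eventA (m m₀ : ℕ) (w : ℕ → E3) : ℕ → Prop
  | 0 => eventA0 m m₀ w
  | i + 1 => eventAi m m₀ w (i + 1)

/-- `k` is a nice cut time of `w` in `Q_i^m`. -/
def NiceCutTime (m m₀ : ℕ) (w : ℕ → E3) (i k : ℕ) : Prop :=
  tFace m w (aTube m i + qTube m m₀ / 2) ≤ k ∧ k ≤ tFace m w (aTube m i + qTube m m₀) ∧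
  (∀ j₁ j₂, tFace m w (aTube m i) ≤ j₁ → j₁ ≤ k → k + 1 ≤ j₂ →
    j₂ ≤ tFace m w (aTube m (i + 1)) → w j₁ ≠ w j₂) ∧
  w k ∈ slabCC m (aTube m i + qTube m m₀ / 2) (aTube m i + qTube m m₀) ∧
  ∀ j, k ≤ j → j ≤ tFace m w (aTube m (i + 1)) → w j ∉ faceH m (aTube m i)

/-- The event `B_i`: `w` has a nice cut time in `Q_i^m`. -/
def eventB (m m₀ : ℕ) (w : ℕ → E3) (i : ℕ) : Prop := ∃ k, NiceCutTime m m₀ w i k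

/-- The event `F_i = A₀ ∩ ⋯ ∩ A_i`. -/
def eventFtube (m m₀ : ℕ) (w : ℕ → E3) (i : ℕ) : Prop := ∀ j ≤ i, eventA m m₀ w j

/-- The event `G_i = B₁ ∩ ⋯ ∩ B_i`. -/
def eventGtube (m m₀ : ℕ) (w : ℕ → E3) (i : ℕ) : Prop :=
  ∀ j, 1 ≤ j → j ≤ i → eventB m m₀ w j

/-- The length of `ξ_i = LE(w[0, t_w(a_{i+1})])`. -/
def xiLen (m : ℕ) (w : ℕ → E3) (i : ℕ) : ℕ := leLen w (tFace m w (aTube m (i + 1)))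

/-- The path `ξ_i = LE(w[0, t_w(a_{i+1})])`. -/
def xiFun (m : ℕ) (w : ℕ → E3) (i : ℕ) : ℕ → E3 := leFun w (tFace m w (aTube m (i + 1)))

/-- The length of `λ_i = LE(w[t_w(a_i), t_w(a_{i+1})])`. -/
def lamTubeLen (m : ℕ) (w : ℕ → E3) (i : ℕ) : ℕ :=
  leLen (fun j => w (tFace m w (aTube m i) + j))
    (tFace m w (aTube m (i + 1)) - tFace m w (aTube m i))

/-- The number of points of `ξ_i ∩ H(a_l - q, a_l + q]` (a subset of `2^{-n}ℤ³`). -/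
def xiSlabCount (m m₀ : ℕ) (w : ℕ → E3) (i l : ℕ) : ℕ :=
  {x : E3 | x ∈ slabOC m (aTube m l - qTube m m₀) (aTube m l + qTube m m₀) ∧
    ∃ j ≤ xiLen m w i, xiFun m w i j = x}.ncard

/-- The event `D_i(C)`. -/
def eventD (β : ℝ) (n m : ℕ) (C : ℝ) (w : ℕ → E3) : ℕ → Prop
  | 0 => (xiLen m w 0 : ℝ) ≤ C * (2 : ℝ) ^ (-(β * m)) * (2 : ℝ) ^ (β * n)
  | i + 1 => (lamTubeLen m w (i + 1) : ℝ) ≤ C * (2 : ℝ) ^ (-(β * m)) * (2 : ℝ) ^ (β * n)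

end
noncomputable section CutAux
namespace CutAux

variable {w : ℕ → E3}

lemma bdd_le {m : ℕ} {P : ℕ → Prop} : BddAbove {k | k ≤ m ∧ P k} :=
  ⟨m, fun _ hx => hx.1⟩

lemma leTime_zero_def (w : ℕ → E3) (m : ℕ) :
    leTime w m 0 = sSup {j | j ≤ m ∧ w j = w 0} := rfl

lemma leTime_succ_def (w : ℕ → E3) (m j : ℕ) :
    leTime w m (j + 1) = sSup {k | k ≤ m ∧ w k = w (leTime w m j + 1)} := rfl

/-- Master package for the loop-erasure times. -/
lemma package (w : ℕ → E3) (m : ℕ) :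
    ∀ j, (∀ j' < j, w (leTime w m j') ≠ w m) →
      leTime w m j ≤ m ∧
      (∀ k ≤ m, w k = w (leTime w m j) → k ≤ leTime w m j) ∧
      (∀ j' < j, leTime w m j' < leTime w m j) := by
  intro j
  induction j with
  | zero =>
    intro _
    have hne : ({k | k ≤ m ∧ w k = w 0} : Set ℕ).Nonempty := ⟨0, Nat.zero_le m, rfl⟩
    have hmem := Nat.sSup_mem hne bdd_le
    rw [leTime_zero_def]
    refine ⟨hmem.1, ?_, fun j' h => absurd h (Nat.not_lt_zero _)⟩
    intro k hk hkw
    exact le_csSup bdd_le ⟨hk, hkw.trans hmem.2⟩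
  | succ j ih =>
    intro hgood
    obtain ⟨h1, h2, h3⟩ := ih (fun j' hj' => hgood j' (hj'.trans_le (Nat.le_succ j)))
    have hne' : w (leTime w m j) ≠ w m := hgood j (Nat.lt_succ_self j)
    have hlt : leTime w m j < m := lt_of_le_of_ne h1 (fun h => hne' (by rw [h]))
    have hmemset : leTime w m j + 1 ∈ {k | k ≤ m ∧ w k = w (leTime w m j + 1)} :=
      ⟨Nat.succ_le_of_lt hlt, rfl⟩
    have hne : ({k | k ≤ m ∧ w k = w (leTime w m j + 1)} : Set ℕ).Nonempty := ⟨_, hmemset⟩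
    have hmem := Nat.sSup_mem hne bdd_le
    have hge : leTime w m j + 1 ≤ leTime w m (j + 1) := by
      rw [leTime_succ_def]; exact le_csSup bdd_le hmemset
    refine ⟨by rw [leTime_succ_def]; exact hmem.1, ?_, ?_⟩
    · intro k hk hkw
      rw [leTime_succ_def]
      refine le_csSup bdd_le ⟨hk, ?_⟩
      have hval : w (leTime w m (j + 1)) = w (leTime w m j + 1) := by
        rw [leTime_succ_def]; exact hmem.2
      exact hkw.trans hval
    · intro j' hj'
      rcases Nat.lt_succ_iff_lt_or_eq.mp hj' with h | h
      · exact (h3 j' h).trans (lt_of_lt_of_le (Nat.lt_succ_self _) hge)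
      · subst h; exact lt_of_lt_of_le (Nat.lt_succ_self _) hge

lemma le_good (w : ℕ → E3) (m : ℕ) : ∀ j < leLen w m, w (leTime w m j) ≠ w m :=
  fun _ hj => Nat.notMem_of_lt_sInf hj

lemma leLen_nonempty (w : ℕ → E3) (m : ℕ) : ∃ j, w (leTime w m j) = w m := by
  by_contra hcon
  push_neg at hcon
  have hgood : ∀ J : ℕ, ∀ j' < J, w (leTime w m j') ≠ w m := fun _ j' _ => hcon j'
  have hmono : ∀ j, j ≤ leTime w m j := by
    intro j
    induction j with
    | zero => exact Nat.zero_le _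
    | succ j ih =>
      obtain ⟨_, _, h3⟩ := package w m (j + 1) (hgood _)
      have := h3 j (Nat.lt_succ_self j)
      omega
  obtain ⟨h1, _, _⟩ := package w m (m + 1) (hgood _)
  have := hmono (m + 1)
  omega

lemma leLen_last (w : ℕ → E3) (m : ℕ) : w (leTime w m (leLen w m)) = w m :=
  Nat.sInf_mem (leLen_nonempty w m)

lemma good_of_le {m j : ℕ} (hj : j ≤ leLen w m) : ∀ j' < j, w (leTime w m j') ≠ w m :=
  fun j' h => le_good w m j' (h.trans_le hj)

lemma leTime_le {m j : ℕ} (hj : j ≤ leLen w m) : leTime w m j ≤ m :=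
  (package w m j (good_of_le hj)).1

lemma leTime_lastVisit {m j : ℕ} (hj : j ≤ leLen w m) :
    ∀ k ≤ m, w k = w (leTime w m j) → k ≤ leTime w m j :=
  (package w m j (good_of_le hj)).2.1

lemma leTime_mono {m j j' : ℕ} (h : j < j') (hj' : j' ≤ leLen w m) :
    leTime w m j < leTime w m j' :=
  (package w m j' (good_of_le hj')).2.2 j h

lemma leTime_lt {m j : ℕ} (hj : j < leLen w m) : leTime w m j < m :=
  lt_of_le_of_ne (leTime_le hj.le) (fun h => le_good w m j hj (by rw [h]))

lemma leTime_ne {m j j' : ℕ} (h : j < j') (hj' : j' ≤ leLen w m) :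
    w (leTime w m j) ≠ w (leTime w m j') := by
  intro he
  have h1 := leTime_lastVisit (h.le.trans hj') (leTime w m j') (leTime_le hj') he.symm
  exact absurd (leTime_mono h hj') (by omega)

lemma leTime_eq_of_val {m j : ℕ} (hj : j ≤ leLen w m) (h : w (leTime w m j) = w m) :
    leTime w m j = m :=
  le_antisymm (leTime_le hj) (leTime_lastVisit hj m le_rfl h.symm)

lemma leTime_at_leLen (w : ℕ → E3) (m : ℕ) : leTime w m (leLen w m) = m :=
  leTime_eq_of_val le_rfl (leLen_last w m)

lemma sSup_shift (c : ℕ) (K : Set ℕ) (hne : K.Nonempty) (hb : BddAbove K) :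
    sSup ((fun k => c + k) '' K) = c + sSup K := by
  have h1 : sSup K ∈ K := Nat.sSup_mem hne hb
  obtain ⟨b, hbb⟩ := hb
  have hb2 : BddAbove ((fun k => c + k) '' K) := by
    refine ⟨c + b, ?_⟩
    rintro x ⟨k', hk', rfl⟩
    exact Nat.add_le_add_left (hbb hk') c
  apply le_antisymm
  · obtain ⟨k', hk', he⟩ :=
      Nat.sSup_mem (⟨c + sSup K, ⟨sSup K, h1, rfl⟩⟩ : ((fun k => c + k) '' K).Nonempty) hb2
    rw [← he]
    exact Nat.add_le_add_left (le_csSup ⟨b, hbb⟩ hk') c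
  · exact le_csSup hb2 ⟨sSup K, h1, rfl⟩

section Cut

variable {T c : ℕ}

lemma cut_prefix (hc : c < T)
    (hcut : ∀ j₁ ≤ c, ∀ j₂, c < j₂ → j₂ ≤ T → w j₁ ≠ w j₂) :
    ∀ j ≤ leLen w c, leTime w T j = leTime w c j := by
  intro j
  induction j with
  | zero =>
    intro _
    rw [leTime_zero_def, leTime_zero_def]
    congr 1
    ext k
    simp only [Set.mem_setOf_eq]
    constructor
    · rintro ⟨hk, he⟩
      refine ⟨?_, he⟩
      by_contra hck
      exact hcut 0 (Nat.zero_le c) k (by omega) hk he.symm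
    · rintro ⟨hk, he⟩
      exact ⟨hk.trans hc.le, he⟩
  | succ j ih =>
    intro hj
    have hjlt : j < leLen w c := Nat.lt_of_succ_le hj
    have hIH := ih hjlt.le
    rw [leTime_succ_def, leTime_succ_def, hIH]
    have hcj : leTime w c j < c := leTime_lt hjlt
    congr 1
    ext k
    simp only [Set.mem_setOf_eq]
    constructor
    · rintro ⟨hk, he⟩
      refine ⟨?_, he⟩
      by_contra hck
      exact hcut (leTime w c j + 1) (by omega) k (by omega) hk he.symm
    · rintro ⟨hk, he⟩
      exact ⟨hk.trans hc.le, he⟩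

lemma cut_prefix_ne (hc : c < T)
    (hcut : ∀ j₁ ≤ c, ∀ j₂, c < j₂ → j₂ ≤ T → w j₁ ≠ w j₂) :
    ∀ j ≤ leLen w c, w (leTime w T j) ≠ w T := by
  intro j hj
  rw [cut_prefix hc hcut j hj]
  exact fun he => hcut (leTime w c j) (leTime_le hj) T hc le_rfl he

lemma cut_len_lt (hc : c < T)
    (hcut : ∀ j₁ ≤ c, ∀ j₂, c < j₂ → j₂ ≤ T → w j₁ ≠ w j₂) :
    leLen w c < leLen w T := by
  by_contra hcon
  push_neg at hcon
  exact cut_prefix_ne hc hcut (leLen w T) hcon (leLen_last w T)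

lemma cut_suffix (hc : c < T)
    (hcut : ∀ j₁ ≤ c, ∀ j₂, c < j₂ → j₂ ≤ T → w j₁ ≠ w j₂) :
    ∀ r ≤ leLen (fun k => w (c + 1 + k)) (T - c - 1),
      leTime w T (leLen w c + 1 + r) =
        c + 1 + leTime (fun k => w (c + 1 + k)) (T - c - 1) r := by
  intro r
  induction r with
  | zero =>
    intro _
    have h0 : leTime w T (leLen w c) = c := by
      rw [cut_prefix hc hcut _ le_rfl]; exact leTime_at_leLen w c
    show leTime w T (leLen w c + 1) = _
    rw [leTime_succ_def, h0, leTime_zero_def]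
    have hset : {k | k ≤ T ∧ w k = w (c + 1)} =
        (fun k => (c + 1) + k) ''
          {k' | k' ≤ T - c - 1 ∧ (fun k => w (c + 1 + k)) k' = (fun k => w (c + 1 + k)) 0} := by
      ext k
      simp only [Set.mem_setOf_eq, Set.mem_image]
      constructor
      · rintro ⟨hk, he⟩
        have hkc : c + 1 ≤ k := by
          by_contra h
          push_neg at h
          exact hcut k (by omega) (c + 1) (by omega) (by omega) he
        refine ⟨k - (c + 1), ⟨by omega, ?_⟩, by omega⟩
        show w (c + 1 + (k - (c + 1))) = w (c + 1 + 0)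
        rw [show c + 1 + (k - (c + 1)) = k by omega, show c + 1 + 0 = c + 1 by omega]
        exact he
      · rintro ⟨k', ⟨hk', he⟩, rfl⟩
        refine ⟨by omega, ?_⟩
        have h2 : w (c + 1 + k') = w (c + 1 + 0) := he
        rw [show c + 1 = c + 1 + 0 by omega]
        exact h2
    rw [hset, sSup_shift]
    · exact ⟨0, Nat.zero_le _, rfl⟩
    · exact bdd_le
  | succ r ih =>
    intro hr
    have hrlt : r < leLen (fun k => w (c + 1 + k)) (T - c - 1) := Nat.lt_of_succ_le hr
    have hIH := ih hrlt.le
    have hur : leTime (fun k => w (c + 1 + k)) (T - c - 1) r < T - c - 1 :=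
      leTime_lt hrlt
    have hidx : leLen w c + 1 + (r + 1) = (leLen w c + 1 + r) + 1 := by omega
    rw [hidx, leTime_succ_def, hIH, leTime_succ_def]
    set u := leTime (fun k => w (c + 1 + k)) (T - c - 1) r with hu
    have hset : {k | k ≤ T ∧ w k = w (c + 1 + u + 1)} =
        (fun k => (c + 1) + k) ''
          {k' | k' ≤ T - c - 1 ∧ (fun k => w (c + 1 + k)) k' = (fun k => w (c + 1 + k)) (u + 1)} := by
      ext k
      simp only [Set.mem_setOf_eq, Set.mem_image]
      constructor
      · rintro ⟨hk, he⟩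
        have hkc : c + 1 ≤ k := by
          by_contra h
          push_neg at h
          exact hcut k (by omega) (c + 1 + u + 1) (by omega) (by omega) he
        refine ⟨k - (c + 1), ⟨by omega, ?_⟩, by omega⟩
        show w (c + 1 + (k - (c + 1))) = w (c + 1 + (u + 1))
        rw [show c + 1 + (k - (c + 1)) = k by omega, show c + 1 + (u + 1) = c + 1 + u + 1 by omega]
        exact he
      · rintro ⟨k', ⟨hk', he⟩, rfl⟩
        refine ⟨by omega, ?_⟩
        have h2 : w (c + 1 + k') = w (c + 1 + (u + 1)) := he
        rw [show c + 1 + u + 1 = c + 1 + (u + 1) by omega]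
        exact h2
    rw [hset, sSup_shift]
    · exact ⟨u + 1, by omega, rfl⟩
    · exact bdd_le

lemma cut_leLen_eq (hc : c < T)
    (hcut : ∀ j₁ ≤ c, ∀ j₂, c < j₂ → j₂ ≤ T → w j₁ ≠ w j₂) :
    leLen w T = leLen w c + 1 + leLen (fun k => w (c + 1 + k)) (T - c - 1) := by
  set w' := fun k => w (c + 1 + k) with hw'
  set T' := T - c - 1 with hT'
  set p := leLen w c with hp
  set L' := leLen w' T' with hL'
  have hwT : w' T' = w T := by
    show w (c + 1 + T') = w T
    rw [show c + 1 + T' = T by omega]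
  have hend : w (leTime w T (p + 1 + L')) = w T := by
    rw [cut_suffix hc hcut L' le_rfl]
    show w' (leTime w' T' L') = w T
    rw [leTime_at_leLen]
    exact hwT
  have hne_before : ∀ j < p + 1 + L', w (leTime w T j) ≠ w T := by
    intro j hj
    rcases le_or_gt j p with h | h
    · exact cut_prefix_ne hc hcut j h
    · have hr : j - (p + 1) < L' := by omega
      have hjj : j = p + 1 + (j - (p + 1)) := by omega
      rw [hjj, cut_suffix hc hcut _ hr.le]
      show w' (leTime w' T' (j - (p + 1))) ≠ w T
      rw [← hwT]
      exact le_good w' T' _ hr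
  apply le_antisymm
  · exact Nat.sInf_le hend
  · by_contra hcon
    push_neg at hcon
    exact hne_before (leLen w T) hcon (leLen_last w T)

end Cut

section Absorb

variable {T' c : ℕ}

lemma absorb_claim2 (hT : T' ≤ c) :
    ∀ j ≤ leLen w c, leTime w c j ≤ T' →
      leTime w c j = leTime w T' j ∧ j ≤ leLen w T' := by
  intro j
  induction j with
  | zero =>
    intro _ hle
    refine ⟨?_, Nat.zero_le _⟩
    have hmc := Nat.sSup_mem (⟨0, Nat.zero_le _, rfl⟩ :
      ({k | k ≤ c ∧ w k = w 0} : Set ℕ).Nonempty) bdd_le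
    have hmT := Nat.sSup_mem (⟨0, Nat.zero_le _, rfl⟩ :
      ({k | k ≤ T' ∧ w k = w 0} : Set ℕ).Nonempty) bdd_le
    apply le_antisymm
    · rw [leTime_zero_def, leTime_zero_def]
      exact le_csSup bdd_le ⟨hle, hmc.2⟩
    · rw [leTime_zero_def, leTime_zero_def]
      exact le_csSup bdd_le ⟨hmT.1.trans hT, hmT.2⟩
  | succ j ih =>
    intro hj hle
    have hjlt : j < leLen w c := Nat.lt_of_succ_le hj
    have hmono : leTime w c j < leTime w c (j + 1) :=
      leTime_mono (Nat.lt_succ_self j) hj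
    obtain ⟨heq, hjL'⟩ := ih hjlt.le (by omega)
    have hjL'lt : j < leLen w T' := by
      rcases lt_or_eq_of_le hjL' with h | h
      · exact h
      · exfalso
        have hval : w (leTime w T' j) = w T' := by rw [h]; exact leLen_last w T'
        have hval2 : w (leTime w c j) = w T' := by rw [heq]; exact hval
        have hTle : T' ≤ leTime w c j := leTime_lastVisit hjlt.le T' hT hval2.symm
        omega
    refine ⟨?_, hjL'lt⟩
    have hcjlt : leTime w c j < c := leTime_lt hjlt
    have hrefle : leTime w c j + 1 ≤ T' := by omega
    have hmc := Nat.sSup_mem (⟨leTime w c j + 1, Nat.succ_le_of_lt hcjlt, rfl⟩ :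
      ({k | k ≤ c ∧ w k = w (leTime w c j + 1)} : Set ℕ).Nonempty) bdd_le
    have hmT := Nat.sSup_mem (⟨leTime w c j + 1, hrefle, rfl⟩ :
      ({k | k ≤ T' ∧ w k = w (leTime w c j + 1)} : Set ℕ).Nonempty) bdd_le
    have hle' : sSup {k | k ≤ c ∧ w k = w (leTime w c j + 1)} ≤ T' := by
      rw [leTime_succ_def] at hle; exact hle
    apply le_antisymm
    · rw [leTime_succ_def, leTime_succ_def, ← heq]
      exact le_csSup bdd_le ⟨hle', hmc.2⟩
    · rw [leTime_succ_def, leTime_succ_def, ← heq]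
      exact le_csSup bdd_le ⟨hmT.1.trans hT, hmT.2⟩

lemma absorb (hT : T' ≤ c) {S : Set E3} (hS : ∀ k, T' < k → k ≤ c → w k ∈ S) :
    leLen w c ≤ leLen w T' +
      ({x | x ∈ S ∧ ∃ j ≤ leLen w c, w (leTime w c j) = x}).ncard := by
  classical
  set L := leLen w c with hL
  set L' := leLen w T' with hL'
  set C := {x | x ∈ S ∧ ∃ j ≤ L, w (leTime w c j) = x} with hC
  have hCfin : C.Finite := by
    apply Set.Finite.subset ((Set.finite_Iic L).image (fun j => w (leTime w c j)))
    rintro x ⟨hxS, j, hj, he⟩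
    exact ⟨j, hj, he⟩
  set A := (Finset.range (L + 1)).filter (fun j => w (leTime w c j) ∈ S) with hA
  set B := (Finset.range (L + 1)).filter (fun j => w (leTime w c j) ∉ S) with hB
  have hAB : A.card + B.card = L + 1 := by
    rw [hA, hB, Finset.card_filter_add_card_filter_not, Finset.card_range]
  have hBle : B.card ≤ L' + 1 := by
    have hsub : B ⊆ Finset.range (L' + 1) := by
      intro j hj
      simp only [hB, Finset.mem_filter, Finset.mem_range] at hj
      obtain ⟨hjL, hjS⟩ := hj
      have hjL2 : j ≤ L := by omega
      have hle2 : leTime w c j ≤ T' := by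
        by_contra h
        push_neg at h
        exact hjS (hS _ h (leTime_le hjL2))
      have := (absorb_claim2 hT j hjL2 hle2).2
      simp only [Finset.mem_range]
      omega
    exact le_trans (Finset.card_le_card hsub) (by rw [Finset.card_range])
  have hAle : A.card ≤ C.ncard := by
    rw [Set.ncard_eq_toFinset_card C hCfin]
    apply Finset.card_le_card_of_injOn (fun j => w (leTime w c j))
    · intro j hj
      simp only [hA, Finset.coe_filter, Finset.mem_filter, Finset.mem_range, Set.mem_setOf_eq] at hj
      rw [Finset.mem_coe, Set.Finite.mem_toFinset]
      exact ⟨hj.2, j, by omega, rfl⟩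
    · intro j hj j' hj' he
      simp only [hA, Finset.coe_filter, Finset.mem_range, Set.mem_setOf_eq] at hj hj'
      by_contra hne
      rcases Nat.lt_or_ge j j' with h | h
      · exact leTime_ne h (by omega) he
      · exact leTime_ne (by omega) (by omega) he.symm
  omega

end Absorb

lemma int_ivt {f : ℕ → ℤ} (hstep : ∀ k, |f (k + 1) - f k| ≤ 1) {z : ℤ} :
    ∀ j j', j ≤ j' → f j ≤ z → z ≤ f j' → ∃ k, j ≤ k ∧ k ≤ j' ∧ f k = z := by
  intro j j' h
  induction j', h using Nat.le_induction with
  | base => intro h1 h2; exact ⟨j, le_rfl, le_rfl, le_antisymm h1 h2⟩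
  | succ j' hjj ih =>
    intro h1 h2
    by_cases hz : z ≤ f j'
    · obtain ⟨k, hk1, hk2, hk3⟩ := ih h1 hz
      exact ⟨k, hk1, hk2.trans (Nat.le_succ j'), hk3⟩
    · push_neg at hz
      have hs := hstep j'
      rw [abs_le] at hs
      exact ⟨j' + 1, hjj.trans (Nat.le_succ j'), le_rfl, by omega⟩

end CutAux
end CutAux


/-- Suppose the walk path `w` realizes the events `F_i ∩ G_i`
(as deterministic conditions on the path).  Then
`len(ξ_i) ≤ len(ξ₀) + Σ_{l=1}^i (len(λ_l) + |ξ_i ∩ H(a_l - q, a_l + q]|)`, which equals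
`len(ξ'_i) + Σ_{l=1}^i |ξ_i ∩ H(a_l - q, a_l + q]|` since the concatenation
`ξ'_i = ξ₀ ⊕ λ₁ ⊕ ⋯ ⊕ λ_i` has length `len(ξ₀) + Σ_{l=1}^i len(λ_l)`. -/
theorem lerw_length_decomposition_on_tube
    (n m m₀ : ℕ) (hm₀ : 10 ≤ m₀) (hm : m = m₀ ^ 10)
    (hn : (2 : ℝ) ^ (-(n : ℤ)) < Real.exp (-(2 : ℝ) ^ ((m : ℝ) ^ 100)))
    (w : ℕ → E3) (hw0 : w 0 = 0)
    (hwlat : ∀ k, IsLatticePoint n (w k))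
    (hwstep : ∀ k, w (k + 1) - w k ∈ nbhdSteps n)
    (i : ℕ) (hi : 1 ≤ i)
    (hfin : hitsFace m w (aTube m (i + 1)))
    (hF : eventFtube m m₀ w i) (hG : eventGtube m m₀ w i) :
    xiLen m w i ≤
        xiLen m w 0 + ∑ l ∈ Finset.Icc 1 i, (lamTubeLen m w l + xiSlabCount m m₀ w i l) ∧
      xiLen m w 0 + ∑ l ∈ Finset.Icc 1 i, (lamTubeLen m w l + xiSlabCount m m₀ w i l) =
        (xiLen m w 0 + ∑ l ∈ Finset.Icc 1 i, lamTubeLen m w l) +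
          ∑ l ∈ Finset.Icc 1 i, xiSlabCount m m₀ w i l := by
  classical
  have h2npos : (0:ℝ) < (2:ℝ) ^ (-(n : ℤ)) := zpow_pos (by norm_num) _
  have h2m0 : (0:ℝ) < (2:ℝ) ^ (-(m : ℤ)) := zpow_pos (by norm_num) _
  have hq0 : (0:ℝ) < qTube m m₀ := zpow_pos (by norm_num) _
  have hqlt : qTube m m₀ < (2:ℝ) ^ (-(m : ℤ)) := by
    rw [qTube]
    exact (zpow_lt_zpow_iff_right₀ (by norm_num)).mpr (by omega)
  have ha_succ : ∀ l : ℕ, aTube m (l+1) = aTube m l + 2 * (2:ℝ) ^ (-(m : ℤ)) := by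
    intro l; simp only [aTube]; push_cast; ring
  have hamono : ∀ l₁ l₂ : ℕ, l₁ ≤ l₂ → aTube m l₁ ≤ aTube m l₂ := by
    intro l₁ l₂ h
    simp only [aTube]
    have hc : (l₁:ℝ) ≤ (l₂:ℝ) := Nat.cast_le.mpr h
    apply mul_le_mul_of_nonneg_left (by linarith) h2m0.le
  have hm2 : 10 ≤ m := by
    rw [hm]; exact le_trans hm₀ (Nat.le_self_pow (by norm_num) m₀)
  have hm0m : m₀ ≤ m := by
    rw [hm]; exact Nat.le_self_pow (by norm_num) m₀
  -- the lattice is much finer than the tube scales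
  have hnn : m + m₀ + 1 < n := by
    set K : ℕ := m + m₀ + 1 with hK
    have hK4 : K + 1 ≤ 4 * m := by omega
    have h4 : (4 * m : ℕ) < 2 ^ (4 * m) := Nat.lt_two_pow_self
    have hKle : ((K+1:ℕ):ℝ) ≤ (2:ℝ) ^ (4*m : ℕ) := by
      calc ((K+1:ℕ):ℝ) ≤ ((4*m:ℕ):ℝ) := by exact_mod_cast hK4
        _ ≤ ((2^(4*m):ℕ):ℝ) := by exact_mod_cast h4.le
        _ = (2:ℝ) ^ (4*m:ℕ) := by push_cast; ring
    have hexp_le : (4*m : ℕ) ≤ m ^ 100 := by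
      calc 4*m ≤ m*m := by nlinarith
        _ = m^2 := by ring
        _ ≤ m^100 := Nat.pow_le_pow_right (by omega) (by norm_num)
    have hpow : (2:ℝ) ^ (4*m:ℕ) ≤ (2:ℝ) ^ ((m:ℝ) ^ 100) := by
      rw [← Real.rpow_natCast 2 (4*m)]
      apply Real.rpow_le_rpow_of_exponent_le one_le_two
      calc ((4*m:ℕ):ℝ) ≤ ((m^100 : ℕ):ℝ) := by exact_mod_cast hexp_le
        _ = (m:ℝ) ^ 100 := by push_cast; ring
    have hXK : ((K+1:ℕ):ℝ) ≤ (2:ℝ) ^ ((m:ℝ) ^ 100) := hKle.trans hpow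
    have h2 : Real.exp (-(2:ℝ) ^ ((m:ℝ) ^ 100)) ≤ Real.exp (-((K+1:ℕ):ℝ)) :=
      Real.exp_le_exp.mpr (by linarith)
    have h3 : Real.exp (-((K+1:ℕ):ℝ)) < (2:ℝ) ^ (-(K:ℤ)) := by
      have he1 : (2:ℝ) ≤ Real.exp 1 := by
        have := Real.add_one_le_exp 1; linarith
      have hA : (2:ℝ) ^ (K:ℕ) ≤ Real.exp 1 ^ K := pow_le_pow_left₀ (by norm_num) he1 K
      rw [Real.exp_one_pow] at hA
      have hB : Real.exp ((K:ℝ)) < Real.exp (((K+1:ℕ)):ℝ) := by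
        apply Real.exp_lt_exp.mpr; push_cast; linarith
      have hC : (2:ℝ) ^ (K:ℕ) < Real.exp (((K+1:ℕ)):ℝ) := lt_of_le_of_lt hA hB
      have hpos : (0:ℝ) < (2:ℝ) ^ (K:ℕ) := by positivity
      have := inv_strictAnti₀ hpos hC
      rw [Real.exp_neg, zpow_neg, zpow_natCast]
      exact this
    have hfinal : (2:ℝ) ^ (-(n:ℤ)) < (2:ℝ) ^ (-(K:ℤ)) :=
      lt_of_lt_of_le hn (le_of_lt (lt_of_le_of_lt h2 h3))
    have := (zpow_lt_zpow_iff_right₀ (by norm_num : (1:ℝ) < 2)).mp hfinal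
    omega
  -- lattice coordinates in the first direction
  choose zc hzc using fun k => hwlat k 0
  have hzstep : ∀ k, |zc (k+1) - zc k| ≤ 1 := by
    intro k
    have hmem := hwstep k
    simp only [nbhdSteps, Finset.mem_image, Finset.mem_univ, true_and] at hmem
    obtain ⟨p, hp⟩ := hmem
    have h1 := congrArg (fun v : E3 => v 0) hp
    simp only [PiLp.smul_apply, PiLp.sub_apply, EuclideanSpace.single_apply,
      smul_eq_mul] at h1
    have habs : |w (k+1) 0 - w k 0| ≤ (2:ℝ) ^ (-(n:ℤ)) := by
      rw [← h1]
      split_ifs with hb hi0 hi0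
      · rw [mul_one, abs_of_pos h2npos]
      · rw [mul_zero, abs_zero]; exact h2npos.le
      · rw [mul_one, abs_neg, abs_of_pos h2npos]
      · rw [mul_zero, abs_zero]; exact h2npos.le
    have hcast : ((zc (k+1) - zc k : ℤ) : ℝ) * (2:ℝ) ^ (-(n:ℤ)) = w (k+1) 0 - w k 0 := by
      push_cast
      rw [hzc (k+1), hzc k]
      ring
    have hfin2 : |((zc (k+1) - zc k : ℤ) : ℝ)| ≤ 1 := by
      have h2 : |((zc (k+1) - zc k : ℤ) : ℝ)| * (2:ℝ) ^ (-(n:ℤ)) ≤ 1 * (2:ℝ) ^ (-(n:ℤ)) := by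
        rw [one_mul]
        calc |((zc (k+1) - zc k : ℤ) : ℝ)| * (2:ℝ) ^ (-(n:ℤ))
            = |((zc (k+1) - zc k : ℤ) : ℝ) * (2:ℝ) ^ (-(n:ℤ))| := by
              rw [abs_mul, abs_of_pos h2npos]
          _ = |w (k+1) 0 - w k 0| := by rw [hcast]
          _ ≤ _ := habs
      exact le_of_mul_le_mul_right h2 h2npos
    exact_mod_cast hfin2
  have crossUp : ∀ (za : ℤ) (a : ℝ), a = (za:ℝ) * (2:ℝ) ^ (-(n:ℤ)) →
      ∀ j j', j ≤ j' → w j 0 ≤ a → a ≤ w j' 0 → ∃ k, j ≤ k ∧ k ≤ j' ∧ w k 0 = a := by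
    intro za a ha j j' hjj h1 h2
    have hz1 : zc j ≤ za := by
      have hmul : (zc j : ℝ) * (2:ℝ) ^ (-(n:ℤ)) ≤ (za:ℝ) * (2:ℝ) ^ (-(n:ℤ)) := by
        rw [← hzc j, ← ha]; exact h1
      exact_mod_cast le_of_mul_le_mul_right hmul h2npos
    have hz2 : za ≤ zc j' := by
      have hmul : (za:ℝ) * (2:ℝ) ^ (-(n:ℤ)) ≤ (zc j' : ℝ) * (2:ℝ) ^ (-(n:ℤ)) := by
        rw [← hzc j', ← ha]; exact h2
      exact_mod_cast le_of_mul_le_mul_right hmul h2npos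
    obtain ⟨k, hk1, hk2, hk3⟩ := CutAux.int_ivt hzstep j j' hjj hz1 hz2
    exact ⟨k, hk1, hk2, by rw [hzc k, hk3, ha]⟩
  have crossDown : ∀ (za : ℤ) (a : ℝ), a = (za:ℝ) * (2:ℝ) ^ (-(n:ℤ)) →
      ∀ j j', j ≤ j' → a ≤ w j 0 → w j' 0 ≤ a → ∃ k, j ≤ k ∧ k ≤ j' ∧ w k 0 = a := by
    intro za a ha j j' hjj h1 h2
    have hstep' : ∀ k, |(-zc (k+1)) - (-zc k)| ≤ 1 := by
      intro k
      rw [show -zc (k+1) - -zc k = -(zc (k+1) - zc k) by ring, abs_neg]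
      exact hzstep k
    have hz1 : -zc j ≤ -za := by
      have : za ≤ zc j := by
        have hmul : (za:ℝ) * (2:ℝ) ^ (-(n:ℤ)) ≤ (zc j : ℝ) * (2:ℝ) ^ (-(n:ℤ)) := by
          rw [← hzc j, ← ha]; exact h1
        exact_mod_cast le_of_mul_le_mul_right hmul h2npos
      omega
    have hz2 : -za ≤ -zc j' := by
      have : zc j' ≤ za := by
        have hmul : (zc j' : ℝ) * (2:ℝ) ^ (-(n:ℤ)) ≤ (za:ℝ) * (2:ℝ) ^ (-(n:ℤ)) := by
          rw [← hzc j', ← ha]; exact h2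
        exact_mod_cast le_of_mul_le_mul_right hmul h2npos
      omega
    obtain ⟨k, hk1, hk2, hk3⟩ := CutAux.int_ivt (f := fun k => -zc k) hstep' j j' hjj hz1 hz2
    have hzk : zc k = za := by
      have : -zc k = -za := hk3
      omega
    exact ⟨k, hk1, hk2, by rw [hzc k, hzk, ha]⟩
  -- divisibility of the relevant levels
  have hdiva : ∀ l : ℕ, ∃ za : ℤ, aTube m l = (za:ℝ) * (2:ℝ) ^ (-(n:ℤ)) := by
    intro l
    refine ⟨(2*(l:ℤ) - 1) * 2^(n - m), ?_⟩
    have hp : (2:ℝ) ^ (n-m:ℕ) * (2:ℝ) ^ (-(n:ℤ)) = (2:ℝ) ^ (-(m:ℤ)) := by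
      rw [← zpow_natCast (2:ℝ) (n-m), ← zpow_add₀ (by norm_num : (2:ℝ) ≠ 0)]
      congr 1
      omega
    rw [aTube]
    push_cast
    rw [mul_assoc, hp]
    ring
  have hdivaq : ∀ l : ℕ, ∃ za : ℤ,
      aTube m l + qTube m m₀ = (za:ℝ) * (2:ℝ) ^ (-(n:ℤ)) := by
    intro l
    refine ⟨(2*(l:ℤ) - 1) * 2^(n - m) + 2^(n - m - m₀), ?_⟩
    have hp : (2:ℝ) ^ (n-m:ℕ) * (2:ℝ) ^ (-(n:ℤ)) = (2:ℝ) ^ (-(m:ℤ)) := by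
      rw [← zpow_natCast (2:ℝ) (n-m), ← zpow_add₀ (by norm_num : (2:ℝ) ≠ 0)]
      congr 1
      omega
    have hp2 : (2:ℝ) ^ (n-m-m₀:ℕ) * (2:ℝ) ^ (-(n:ℤ)) = (2:ℝ) ^ (-((m:ℤ)+(m₀:ℤ))) := by
      rw [← zpow_natCast (2:ℝ) (n-m-m₀), ← zpow_add₀ (by norm_num : (2:ℝ) ≠ 0)]
      congr 1
      omega
    rw [aTube, qTube]
    push_cast
    rw [add_mul, mul_assoc, hp, hp2]
    ring
  -- event extraction
  have hA0 : eventA0 m m₀ w := hF 0 (Nat.zero_le i)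
  have hAl : ∀ l, 1 ≤ l → l ≤ i → eventAi m m₀ w l := by
    intro l h1 h2
    have hl := hF l h2
    cases l with
    | zero => omega
    | succ l => exact hl
  have hhits : ∀ l, 1 ≤ l → l ≤ i + 1 → hitsFace m w (aTube m l) := by
    intro l h1 h2
    rcases Nat.lt_or_ge l (i+1) with h | h
    · exact (hAl l h1 (by omega)).1
    · have hh : l = i + 1 := by omega
      rw [hh]; exact hfin
  have hface : ∀ l, 1 ≤ l → l ≤ i + 1 →
      w (tFace m w (aTube m l)) ∈ faceH m (aTube m l) :=
    fun l h1 h2 => Nat.sInf_mem (hhits l h1 h2)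
  have hx0T : ∀ l, 1 ≤ l → l ≤ i + 1 → w (tFace m w (aTube m l)) 0 = aTube m l :=
    fun l h1 h2 => (hface l h1 h2).1
  have hTlt : ∀ l, 1 ≤ l → l ≤ i →
      tFace m w (aTube m l) < tFace m w (aTube m (l+1)) :=
    fun l h1 h2 => (hAl l h1 h2).2.2.1
  have hTmono : ∀ l₂, l₂ ≤ i + 1 → ∀ l₁, 1 ≤ l₁ → l₁ ≤ l₂ →
      tFace m w (aTube m l₁) ≤ tFace m w (aTube m l₂) := by
    intro l₂
    induction l₂ with
    | zero => intro _ l₁ h1 h12; omega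
    | succ l₂ ih =>
      intro h2 l₁ h1 h12
      rcases Nat.lt_or_ge l₁ (l₂+1) with h | h
      · exact (ih (by omega) l₁ h1 (by omega)).trans (hTlt l₂ (by omega) (by omega)).le
      · have hh : l₁ = l₂ + 1 := by omega
        rw [hh]
  have hconf : ∀ l, 1 ≤ l → l ≤ i → ∀ k, tFace m w (aTube m l) ≤ k →
      k ≤ tFace m w (aTube m (l+1)) →
      w k ∈ slabOC m (aTube m l - qTube m m₀) (aTube m (l+1)) :=
    fun l h1 h2 => (hAl l h1 h2).2.2.2.2.1
  have hconf0 : ∀ k, k ≤ tFace m w (aTube m 1) →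
      w k ∈ slabCC m (aTube m 0) (aTube m 1) := hA0.2.2.1
  have hcov : ∀ l₂, 1 ≤ l₂ → l₂ ≤ i + 1 → ∀ k, k ≤ tFace m w (aTube m l₂) →
      k ≤ tFace m w (aTube m 1) ∨
        ∃ l, 1 ≤ l ∧ l + 1 ≤ l₂ ∧ tFace m w (aTube m l) ≤ k ∧
          k ≤ tFace m w (aTube m (l+1)) := by
    intro l₂ h1
    induction l₂, h1 using Nat.le_induction with
    | base => intro _ k hk; exact Or.inl hk
    | succ l₂ hl₂ ih =>
      intro h2 k hk
      rcases le_or_gt k (tFace m w (aTube m l₂)) with h | h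
      · rcases ih (by omega) k h with h' | ⟨l, hl1, hl2, hl3, hl4⟩
        · exact Or.inl h'
        · exact Or.inr ⟨l, hl1, by omega, hl3, hl4⟩
      · exact Or.inr ⟨l₂, by omega, le_rfl, h.le, hk⟩
  have hx0le : ∀ l₂, 1 ≤ l₂ → l₂ ≤ i + 1 → ∀ k, k ≤ tFace m w (aTube m l₂) →
      w k 0 ≤ aTube m l₂ := by
    intro l₂ h1 h2 k hk
    rcases hcov l₂ h1 h2 k hk with h | ⟨l, hl1, hl2, hl3, hl4⟩
    · exact le_trans ((hconf0 k h).2.1) (hamono 1 l₂ h1)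
    · exact le_trans ((hconf l hl1 (by omega) k hl3 hl4).2.1) (hamono (l+1) l₂ hl2)
  have htrans : ∀ k, k ≤ tFace m w (aTube m (i+1)) →
      |w k 1| ≤ (2:ℝ) ^ (-(m:ℤ)) ∧ |w k 2| ≤ (2:ℝ) ^ (-(m:ℤ)) := by
    intro k hk
    rcases hcov (i+1) (by omega) le_rfl k hk with h | ⟨l, hl1, hl2, hl3, hl4⟩
    · exact ⟨(hconf0 k h).2.2.1, (hconf0 k h).2.2.2⟩
    · exact ⟨(hconf l hl1 (by omega) k hl3 hl4).2.2.1,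
        (hconf l hl1 (by omega) k hl3 hl4).2.2.2⟩
  have hfaceof : ∀ (av : ℝ) (k : ℕ), k ≤ tFace m w (aTube m (i+1)) → w k 0 = av →
      w k ∈ faceH m av :=
    fun av k hk h0 => ⟨h0, (htrans k hk).1, (htrans k hk).2⟩
  have hwin : ∀ k, k ≤ tFace m w (aTube m (i+1)) → tFace m w (aTube m 1) ≤ k →
      ∃ l, 1 ≤ l ∧ l ≤ i ∧ tFace m w (aTube m l) ≤ k ∧
        k ≤ tFace m w (aTube m (l+1)) ∧ aTube m l - qTube m m₀ < w k 0 := by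
    intro k hk h1k
    rcases hcov (i+1) (by omega) le_rfl k hk with h | ⟨l, hl1, hl2, hl3, hl4⟩
    · have hkeq : k = tFace m w (aTube m 1) := le_antisymm h h1k
      refine ⟨1, le_rfl, hi, by omega, ?_, ?_⟩
      · rw [hkeq]; exact hTmono 2 (by omega) 1 le_rfl (by omega)
      · rw [hkeq, hx0T 1 le_rfl (by omega)]; linarith
    · exact ⟨l, hl1, by omega, hl3, hl4, (hconf l hl1 (by omega) k hl3 hl4).1⟩
  -- the per-window step
  have hstep_r : ∀ r, 1 ≤ r → r ≤ i →
      leLen w (tFace m w (aTube m (r+1))) ≤ leLen w (tFace m w (aTube m r)) +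
        (lamTubeLen m w r + xiSlabCount m m₀ w i r) := by
    intro r hr1 hr2
    obtain ⟨c, hc1, hc2, hcii, hciii, hciv⟩ := hG r hr1 hr2
    have hx0c1 : aTube m r + qTube m m₀ / 2 ≤ w c 0 := hciii.1
    have hx0c2 : w c 0 ≤ aTube m r + qTube m m₀ := hciii.2.1
    have hcTr : tFace m w (aTube m r) ≤ c := by
      by_contra hcontra
      push_neg at hcontra
      have := hx0le r hr1 (by omega) c (by omega)
      linarith
    have hTrles : tFace m w (aTube m r) ≤ tFace m w (aTube m (r+1)) :=
      (hTlt r hr1 hr2).le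
    have hTi1 : tFace m w (aTube m (r+1)) ≤ tFace m w (aTube m (i+1)) :=
      hTmono (i+1) le_rfl (r+1) (by omega) (by omega)
    have hx0Tr : w (tFace m w (aTube m r)) 0 = aTube m r := hx0T r hr1 (by omega)
    have hx0Tr1 : w (tFace m w (aTube m (r+1))) 0 = aTube m (r+1) :=
      hx0T (r+1) (by omega) (by omega)
    have haq_lt : aTube m r + qTube m m₀ < aTube m (r+1) := by
      rw [ha_succ r]; linarith
    obtain ⟨zaq, hzaq⟩ := hdivaq r
    obtain ⟨zar, hzar⟩ := hdiva r
    have hcT1 : c ≤ tFace m w (aTube m (r+1)) := by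
      obtain ⟨k', hk1, hk2, hk3⟩ := crossUp zaq _ hzaq (tFace m w (aTube m r))
        (tFace m w (aTube m (r+1))) hTrles (by rw [hx0Tr]; linarith)
        (by rw [hx0Tr1]; linarith)
      have hkT : k' ≤ tFace m w (aTube m (i+1)) := le_trans hk2 hTi1
      have : tFace m w (aTube m r + qTube m m₀) ≤ k' :=
        Nat.sInf_le (hfaceof _ k' hkT hk3)
      omega
    have hclt : c < tFace m w (aTube m (r+1)) := by
      rcases lt_or_eq_of_le hcT1 with h | h
      · exact h
      · exfalso
        rw [h, hx0Tr1] at hx0c2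
        linarith
    have hsuffS : ∀ k, tFace m w (aTube m r) ≤ k → k ≤ c →
        w k 0 ≤ aTube m r + qTube m m₀ := by
      intro k hk1 hk2
      by_contra hcontra
      push_neg at hcontra
      obtain ⟨k', hk'1, hk'2, hk'3⟩ := crossUp zaq _ hzaq (tFace m w (aTube m r)) k hk1
        (by rw [hx0Tr]; linarith) hcontra.le
      have hkT : k' ≤ tFace m w (aTube m (i+1)) :=
        le_trans (hk'2.trans hk2) (le_trans hcT1 hTi1)
      have hge : tFace m w (aTube m r + qTube m m₀) ≤ k' :=
        Nat.sInf_le (hfaceof _ k' hkT hk'3)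
      have hkk : k = k' := by omega
      rw [← hkk] at hk'3
      linarith
    have hF6 : ∀ j, c < j → j ≤ tFace m w (aTube m (r+1)) → aTube m r < w j 0 := by
      intro j hj1 hj2
      by_contra hcontra
      push_neg at hcontra
      obtain ⟨k', hk'1, hk'2, hk'3⟩ := crossDown zar _ hzar c j hj1.le
        (by linarith) hcontra
      have hkT : k' ≤ tFace m w (aTube m (i+1)) := le_trans (hk'2.trans hj2) hTi1
      exact hciv k' hk'1 (hk'2.trans hj2) (hfaceof _ k' hkT hk'3)
    have Hcut : ∀ j₁ ≤ c, ∀ j₂, c < j₂ → j₂ ≤ tFace m w (aTube m (i+1)) →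
        w j₁ ≠ w j₂ := by
      intro j₁ hj1 j₂ hj2 hj3 heq
      have hx : w j₁ 0 = w j₂ 0 := by rw [heq]
      by_cases hj2r : j₂ ≤ tFace m w (aTube m (r+1))
      · by_cases hj1r : j₁ < tFace m w (aTube m r)
        · have h1 : w j₁ 0 ≤ aTube m r := hx0le r hr1 (by omega) j₁ (by omega)
          have h2 := hF6 j₂ hj2 hj2r
          linarith
        · push_neg at hj1r
          exact hcii j₁ j₂ hj1r hj1 (by omega) hj2r heq
      · push_neg at hj2r
        have hT1j : tFace m w (aTube m 1) ≤ j₂ :=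
          le_trans (le_trans (hTmono (r+1) (by omega) 1 le_rfl (by omega)) hj2r.le)
            le_rfl
        obtain ⟨l, hl1, hl2, hl3, hl4, hl5⟩ := hwin j₂ hj3 hT1j
        have hlge : r + 1 ≤ l := by
          by_contra hcontra
          push_neg at hcontra
          have := hTmono (r+1) (by omega) (l+1) (by omega) (by omega)
          omega
        have h2 : aTube m (r+1) ≤ aTube m l := hamono (r+1) l hlge
        have h1 : w j₁ 0 ≤ aTube m r + qTube m m₀ := by
          rcases Nat.lt_or_ge j₁ (tFace m w (aTube m r)) with hcase | hcase
          · have := hx0le r hr1 (by omega) j₁ (by omega)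
            linarith
          · exact hsuffS j₁ hcase hj1
        have hnum : aTube m r + qTube m m₀ < aTube m (r+1) - qTube m m₀ := by
          rw [ha_succ r]; linarith
        linarith
    have Hcut1 : ∀ j₁ ≤ c, ∀ j₂, c < j₂ → j₂ ≤ tFace m w (aTube m (r+1)) →
        w j₁ ≠ w j₂ :=
      fun j₁ h1 j₂ h2 h3 => Hcut j₁ h1 j₂ h2 (h3.trans hTi1)
    have hlen1 := CutAux.cut_leLen_eq hclt Hcut1
    -- window cut
    have hwcut : ∀ j₁ ≤ c - tFace m w (aTube m r), ∀ j₂,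
        c - tFace m w (aTube m r) < j₂ →
        j₂ ≤ tFace m w (aTube m (r+1)) - tFace m w (aTube m r) →
        (fun j => w (tFace m w (aTube m r) + j)) j₁ ≠
          (fun j => w (tFace m w (aTube m r) + j)) j₂ := by
      intro j₁ h1 j₂ h2 h3
      exact hcii (tFace m w (aTube m r) + j₁) (tFace m w (aTube m r) + j₂)
        (by omega) (by omega) (by omega) (by omega)
    have hwclt : c - tFace m w (aTube m r) <
        tFace m w (aTube m (r+1)) - tFace m w (aTube m r) := by omega
    have hlen4 := CutAux.cut_leLen_eq hwclt hwcut
    have hfun : (fun k => (fun j => w (tFace m w (aTube m r) + j))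
        ((c - tFace m w (aTube m r)) + 1 + k)) = (fun k => w (c + 1 + k)) := by
      funext k
      show w (tFace m w (aTube m r) + (c - tFace m w (aTube m r) + 1 + k)) = w (c + 1 + k)
      have harg : tFace m w (aTube m r) + (c - tFace m w (aTube m r) + 1 + k) = c + 1 + k := by
        omega
      rw [harg]
    have hTsub : tFace m w (aTube m (r+1)) - tFace m w (aTube m r) -
        (c - tFace m w (aTube m r)) - 1 = tFace m w (aTube m (r+1)) - c - 1 := by omega
    rw [hfun, hTsub] at hlen4
    -- absorption
    have hSmem : ∀ k, tFace m w (aTube m r) < k → k ≤ c →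
        w k ∈ slabOC m (aTube m r - qTube m m₀) (aTube m r + qTube m m₀) := by
      intro k h1 h2
      have hk1 : k ≤ tFace m w (aTube m (r+1)) := h2.trans hcT1
      have hck := hconf r hr1 hr2 k h1.le hk1
      exact ⟨hck.1, hsuffS k h1.le h2, hck.2.2.1, hck.2.2.2⟩
    have habs := CutAux.absorb (w := w) hcTr hSmem
    -- count bound
    have hcltT : c < tFace m w (aTube m (i+1)) := lt_of_lt_of_le hclt hTi1
    have hsub : {x | x ∈ slabOC m (aTube m r - qTube m m₀) (aTube m r + qTube m m₀) ∧
          ∃ j ≤ leLen w c, w (leTime w c j) = x} ⊆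
        {x : E3 | x ∈ slabOC m (aTube m r - qTube m m₀) (aTube m r + qTube m m₀) ∧
          ∃ j ≤ xiLen m w i, xiFun m w i j = x} := by
      rintro x ⟨hx1, j, hj, hj2⟩
      refine ⟨hx1, j, ?_, ?_⟩
      · have := CutAux.cut_len_lt hcltT Hcut
        show j ≤ leLen w (tFace m w (aTube m (i+1)))
        omega
      · show w (leTime w (tFace m w (aTube m (i+1))) j) = x
        rw [CutAux.cut_prefix hcltT Hcut j hj]
        exact hj2
    have hfinset : ({x : E3 | x ∈ slabOC m (aTube m r - qTube m m₀)
          (aTube m r + qTube m m₀) ∧ ∃ j ≤ xiLen m w i, xiFun m w i j = x}).Finite := by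
      apply Set.Finite.subset ((Set.finite_Iic (xiLen m w i)).image (xiFun m w i))
      rintro x ⟨hx1, j, hj, hj2⟩
      exact ⟨j, hj, hj2⟩
    have hcnt : ({x | x ∈ slabOC m (aTube m r - qTube m m₀) (aTube m r + qTube m m₀) ∧
          ∃ j ≤ leLen w c, w (leTime w c j) = x}).ncard ≤ xiSlabCount m m₀ w i r :=
      Set.ncard_le_ncard hsub hfinset
    have hlam : lamTubeLen m w r =
        leLen (fun j => w (tFace m w (aTube m r) + j)) (c - tFace m w (aTube m r)) +
          1 + leLen (fun k => w (c + 1 + k)) (tFace m w (aTube m (r+1)) - c - 1) := hlen4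
    omega
  -- assemble by induction
  have key : ∀ l, l ≤ i → leLen w (tFace m w (aTube m (l+1))) ≤
      leLen w (tFace m w (aTube m 1)) +
        ∑ l' ∈ Finset.Icc 1 l, (lamTubeLen m w l' + xiSlabCount m m₀ w i l') := by
    intro l
    induction l with
    | zero => intro _; simp
    | succ l ih =>
      intro hl
      have h1 := hstep_r (l+1) (by omega) hl
      have h2 := ih (by omega)
      rw [Finset.sum_Icc_succ_top (by omega : 1 ≤ l + 1)]
      omega
  have hxi0 : xiLen m w 0 = leLen w (tFace m w (aTube m 1)) := by norm_num [xiLen]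
  have hxii : xiLen m w i = leLen w (tFace m w (aTube m (i+1))) := rfl
  constructor
  · rw [hxii, hxi0]
    exact key i le_rfl
  · rw [Finset.sum_add_distrib, add_assoc]
end

section
/- Let λ be a finite nearest-neighbour path in 2^{−n}ℤ³ and γ = LE(λ) its loop erasure. For r > 0 and a path μ define σ₀^μ = 0, σ_l^μ = inf{j ≥ σ_{l−1}^μ : |μ(j) − μ(σ_{l−1}^μ)| ≥ r} for l ≥ 1, and let N_r(μ) be the largest l with σ_l^μ ≤ len(μ) (and 0 if there is none). Then for every r > 0, N_r(γ) ≤ N_{r/3}(λ). -/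
open MeasureTheory ProbabilityTheory Filter Set
open scoped ENNReal NNReal

section Helpers

lemma hitSeq_succ (v : ℕ → E3) (M : ℕ) (q : ℝ) (l : ℕ) :
    hitSeq v M q (l+1) =
      sInf {j | hitSeq v M q l ≤ j ∧ j ≤ M ∧ q ≤ ‖v j - v (hitSeq v M q l)‖} := rfl

lemma hit_bound (v : ℕ → E3) (M : ℕ) (q : ℝ) (l : ℕ)
    (h : ∀ i < l, hitSeq v M q i < hitSeq v M q (i+1)) :
    ∀ i ≤ l, i ≤ hitSeq v M q i ∧ hitSeq v M q i ≤ M := by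
  intro i hi
  induction i with
  | zero => exact ⟨Nat.zero_le _, Nat.zero_le _⟩
  | succ i ih =>
    have h1 := ih (by omega)
    have h2 := h i (by omega)
    have hne : {j | hitSeq v M q i ≤ j ∧ j ≤ M ∧ q ≤ ‖v j - v (hitSeq v M q i)‖}.Nonempty := by
      by_contra hc
      rw [Set.not_nonempty_iff_eq_empty] at hc
      rw [hitSeq_succ, hc, Nat.sInf_empty] at h2
      omega
    have hmem := Nat.sInf_mem hne
    rw [← hitSeq_succ] at hmem
    exact ⟨by omega, hmem.2.1⟩

lemma hit_mono (v : ℕ → E3) (M : ℕ) (q : ℝ) (l : ℕ)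
    (h : ∀ i < l, hitSeq v M q i < hitSeq v M q (i+1)) :
    ∀ i ≤ l, ∀ i' ≤ i, hitSeq v M q i' ≤ hitSeq v M q i := by
  intro i hi
  induction i with
  | zero =>
    intro i' hi'
    have : i' = 0 := by omega
    subst this; exact le_rfl
  | succ i ih =>
    intro i' hi'
    rcases Nat.lt_or_ge i' (i+1) with hc | hc
    · exact le_trans (ih (by omega) i' (by omega)) (le_of_lt (h i (by omega)))
    · have : i' = i + 1 := by omega
      subst this; exact le_rfl

lemma hitSeq_mem_of_lt (v : ℕ → E3) (M : ℕ) (q : ℝ) (l : ℕ)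
    (h : hitSeq v M q l < hitSeq v M q (l+1)) :
    hitSeq v M q l ≤ hitSeq v M q (l+1) ∧ hitSeq v M q (l+1) ≤ M ∧
      q ≤ ‖v (hitSeq v M q (l+1)) - v (hitSeq v M q l)‖ := by
  have hne : {j | hitSeq v M q l ≤ j ∧ j ≤ M ∧ q ≤ ‖v j - v (hitSeq v M q l)‖}.Nonempty := by
    by_contra hc
    rw [Set.not_nonempty_iff_eq_empty] at hc
    rw [hitSeq_succ, hc, Nat.sInf_empty] at h
    omega
  have hmem := Nat.sInf_mem hne
  rw [← hitSeq_succ] at hmem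
  exact hmem

lemma goodSet_bddAbove (v : ℕ → E3) (M : ℕ) (q : ℝ) :
    BddAbove {l | ∀ i < l, hitSeq v M q i < hitSeq v M q (i+1)} := by
  refine ⟨M, fun g hg => ?_⟩
  have := hit_bound v M q g hg g le_rfl
  omega

lemma hitCount_mem (v : ℕ → E3) (M : ℕ) (q : ℝ) :
    ∀ i < hitCount v M q, hitSeq v M q i < hitSeq v M q (i+1) := by
  have hne : {l | ∀ i < l, hitSeq v M q i < hitSeq v M q (i+1)}.Nonempty :=
    ⟨0, by intro i hi; omega⟩
  exact Nat.sSup_mem hne (goodSet_bddAbove v M q)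

lemma leTime_le (w : ℕ → E3) (m : ℕ) : ∀ i, leTime w m i ≤ m := by
  intro i
  cases i with
  | zero =>
    have hne : {j | j ≤ m ∧ w j = w 0}.Nonempty := ⟨0, Nat.zero_le m, rfl⟩
    exact (Nat.sSup_mem hne ⟨m, fun x hx => hx.1⟩).1
  | succ i =>
    by_cases hne : {j | j ≤ m ∧ w j = w (leTime w m i + 1)}.Nonempty
    · exact (Nat.sSup_mem hne ⟨m, fun x hx => hx.1⟩).1
    · rw [Set.not_nonempty_iff_eq_empty] at hne
      show sSup _ ≤ m
      rw [hne, csSup_empty]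
      exact bot_le

lemma leTime_lt (w : ℕ → E3) (m : ℕ) (i : ℕ) (hi : i < leLen w m) :
    leTime w m i < leTime w m (i+1) := by
  have hnm : w (leTime w m i) ≠ w m := Nat.notMem_of_lt_sInf hi
  have hlt : leTime w m i < m := by
    rcases Nat.lt_or_ge (leTime w m i) m with h | h
    · exact h
    · exact absurd (by rw [Nat.le_antisymm (leTime_le w m i) h]) hnm
  have hmem : leTime w m i + 1 ∈ {j | j ≤ m ∧ w j = w (leTime w m i + 1)} := ⟨hlt, rfl⟩
  have : leTime w m i + 1 ≤ sSup {j | j ≤ m ∧ w j = w (leTime w m i + 1)} :=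
    le_csSup ⟨m, fun x hx => hx.1⟩ hmem
  calc leTime w m i < leTime w m i + 1 := Nat.lt_succ_self _
    _ ≤ leTime w m (i+1) := this

lemma leTime_mono (w : ℕ → E3) (m : ℕ) :
    ∀ j ≤ leLen w m, ∀ i ≤ j, leTime w m i ≤ leTime w m j := by
  intro j hj
  induction j with
  | zero =>
    intro i hi
    have : i = 0 := by omega
    subst this; exact le_rfl
  | succ j ih =>
    intro i hi
    rcases Nat.lt_or_ge i (j+1) with hc | hc
    · exact le_trans (ih (by omega) i (by omega)) (le_of_lt (leTime_lt w m j (by omega)))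
    · have : i = j + 1 := by omega
      subst this; exact le_rfl

end Helpers

/-- Let `γ = LE(λ)` be the loop erasure of a finite nearest-neighbour
path `λ` in `2^{-n}ℤ³`, and for `r > 0` let `N_r(μ)` be the number of greedy
`r`-displacement times of a path `μ`.  Then `N_r(γ) ≤ N_{r/3}(λ)` for every `r > 0`. -/
theorem displacement_count_of_loop_erasure_le
    (n : ℕ) (w : ℕ → E3) (m : ℕ)
    (hwlat : ∀ k, IsLatticePoint n (w k))
    (hwstep : ∀ k < m, w (k + 1) - w k ∈ nbhdSteps n)
    (r : ℝ) (hr : 0 < r) :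
    hitCount (leFun w m) (leLen w m) r ≤ hitCount w m (r / 3) := by
  have hρ : 0 < r / 3 := by linarith
  set L := leLen w m with hLdef
  set N := hitCount (leFun w m) L r with hNdef
  have hNgood : ∀ i < N, hitSeq (leFun w m) L r i < hitSeq (leFun w m) L r (i+1) :=
    hitCount_mem (leFun w m) L r
  have hτle : ∀ i ≤ N, hitSeq (leFun w m) L r i ≤ L := fun i hi =>
    (hit_bound (leFun w m) L r N hNgood i hi).2
  set σ := hitSeq w m (r/3) with hσdef
  set Ggood := {l | ∀ i < l, σ i < σ (i+1)} with hGdef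
  have hGbdd : BddAbove Ggood := goodSet_bddAbove w m (r/3)
  have key : ∀ l ≤ N, ∃ j, l ≤ j ∧ j ∈ Ggood ∧
      σ j ≤ leTime w m (hitSeq (leFun w m) L r l) := by
    intro l hl
    induction l with
    | zero =>
      exact ⟨0, le_rfl, fun i hi => absurd hi (Nat.not_lt_zero i), Nat.zero_le _⟩
    | succ l ih =>
      obtain ⟨j, hjl, hjG, hjσ⟩ := ih (by omega)
      set a := leTime w m (hitSeq (leFun w m) L r l) with hadef
      set b := leTime w m (hitSeq (leFun w m) L r (l+1)) with hbdef
      have hττ : hitSeq (leFun w m) L r l < hitSeq (leFun w m) L r (l+1) :=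
        hNgood l (by omega)
      have hab : a ≤ b :=
        leTime_mono w m _ (hτle (l+1) hl) _ (le_of_lt hττ)
      have hbm : b ≤ m := leTime_le w m _
      have ham : a ≤ m := leTime_le w m _
      have hrab : r ≤ ‖w b - w a‖ := by
        have h := (hitSeq_mem_of_lt (leFun w m) L r l hττ).2.2
        simpa [leFun, hbdef, hadef] using h
      set T := {j' | j' ∈ Ggood ∧ σ j' ≤ b} with hTdef
      have hTne : T.Nonempty := ⟨j, hjG, le_trans hjσ hab⟩
      have hTbdd : BddAbove T := hGbdd.mono fun x hx => hx.1
      set J := sSup T with hJdef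
      have hJmem : J ∈ T := Nat.sSup_mem hTne hTbdd
      rcases Nat.lt_or_ge a (σ J) with hc | hc
      · -- σ J > a : J works
        refine ⟨J, ?_, hJmem.1, hJmem.2⟩
        by_contra hc2
        have hJj : J ≤ j := by omega
        have hmono : σ J ≤ σ j := hit_mono w m (r/3) j hjG j le_rfl J hJj
        omega
      · -- σ J ≤ a : contradiction with maximality of J
        exfalso
        -- if some t ∈ [σ J, m] with t ≤ b has displacement ≥ r/3, then J+1 ∈ T
        have hstep : ∀ t, σ J ≤ t → t ≤ m → t ≤ b → r/3 ≤ ‖w t - w (σ J)‖ → False := by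
          intro t ht1 ht2 htb ht3
          have hSne : {k | σ J ≤ k ∧ k ≤ m ∧ r/3 ≤ ‖w k - w (σ J)‖}.Nonempty :=
            ⟨t, ht1, ht2, ht3⟩
          have hmem0 := Nat.sInf_mem hSne
          rw [← hitSeq_succ] at hmem0
          have hmem : σ J ≤ σ (J+1) ∧ σ (J+1) ≤ m ∧
              r/3 ≤ ‖w (σ (J+1)) - w (σ J)‖ := hmem0
          have hlt : σ J < σ (J+1) := by
            rcases Nat.lt_or_ge (σ J) (σ (J+1)) with h | h
            · exact h
            · exfalso
              have heq : σ (J+1) = σ J := le_antisymm h hmem.1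
              have h3 := hmem.2.2
              rw [heq, sub_self, norm_zero] at h3
              linarith
          have hJ1G : J + 1 ∈ Ggood := by
            intro i hi
            rcases Nat.lt_or_ge i J with h | h
            · exact hJmem.1 i h
            · have : i = J := by omega
              subst this; exact hlt
          have hJ1b : σ (J+1) ≤ t := by
            have h := Nat.sInf_le (show t ∈ {k | σ J ≤ k ∧ k ≤ m ∧
                r/3 ≤ ‖w k - w (σ J)‖} from ⟨ht1, ht2, ht3⟩)
            rw [← hitSeq_succ] at h
            exact h
          have hmemT : J + 1 ∈ T := ⟨hJ1G, le_trans hJ1b htb⟩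
          have hle : J + 1 ≤ J := le_csSup hTbdd hmemT
          omega
        -- a is within r/3 of σ J
        have haclose : ‖w a - w (σ J)‖ < r/3 := by
          by_contra hcc
          push_neg at hcc
          exact hstep a hc ham hab hcc
        -- hence b is far from σ J
        have hbfar : r/3 ≤ ‖w b - w (σ J)‖ := by
          have htri : ‖w b - w a‖ ≤ ‖w b - w (σ J)‖ + ‖w (σ J) - w a‖ :=
            norm_sub_le_norm_sub_add_norm_sub _ _ _
          have : ‖w (σ J) - w a‖ = ‖w a - w (σ J)‖ := norm_sub_rev _ _
          linarith
        exact hstep b (le_trans hc hab) hbm le_rfl hbfar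
  obtain ⟨j, hjN, hjG, _⟩ := key N le_rfl
  have : N ≤ sSup Ggood := le_trans hjN (le_csSup hGbdd hjG)
  exact this
end
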